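/- Let H be an induced subgraph of a graph G, let f : H → Y be a graph homomorphism, and let X = Y ∪_H G be the pushout. If H is a ×-homotopy deformation retract of G, then Y (viewed as a subgraph of X via the natural map) is a ×-homotopy deformation retract of X. -/

import Mathlib

/-- A graph: a symmetric (loops allowed) adjacency relation on the vertex type `V`. -/
structure SymGraph (V : Type*) where
  Adj : V → V → Prop
  symm : ∀ v w, Adj v w → Adj w v

/-- A graph homomorphism from `G` to `H`. -/
def IsGraphHom {V W : Type*} (G : SymGraph V) (H : SymGraph W) (f : V → W) : Prop :=
  ∀ v w, G.Adj v w → H.Adj (f v) (f w)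

/-- A multi-homomorphism from `G` to `H`: it assigns to each vertex of `G` a nonempty set of
vertices of `H` so that adjacent vertices have completely adjacent images.  The
multi-homomorphisms, ordered pointwise by inclusion, form the Hom complex `Hom(G, H)`. -/
def IsMultiHom {V W : Type*} (G : SymGraph V) (H : SymGraph W) (η : V → Set W) : Prop :=
  (∀ v, (η v).Nonempty) ∧ ∀ v w, G.Adj v w → ∀ x ∈ η v, ∀ y ∈ η w, H.Adj x y

/-- One step of a zigzag in `Hom(G, H)`: both multi-homomorphisms are comparable. -/
def mhStep {V W : Type*} (G : SymGraph V) (H : SymGraph W) (η η' : V → Set W) : Prop :=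
  IsMultiHom G H η ∧ IsMultiHom G H η' ∧ ((∀ v, η v ⊆ η' v) ∨ (∀ v, η' v ⊆ η v))

/-- Two graph homomorphisms are ×-homotopic iff they lie in the same connected component of
the Hom complex `Hom(G, H)`. -/
def XHomotopic {V W : Type*} (G : SymGraph V) (H : SymGraph W) (f g : V → W) : Prop :=
  Relation.ReflTransGen (mhStep G H) (fun v => {f v}) (fun v => {g v})

/-- `f : G → H` is a ×-homotopy equivalence. -/
def IsXHomotopyEquiv {V W : Type*} (G : SymGraph V) (H : SymGraph W) (f : V → W) : Prop :=
  IsGraphHom G H f ∧ ∃ h : W → V, IsGraphHom H G h ∧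
    XHomotopic G G (h ∘ f) id ∧ XHomotopic H H (f ∘ h) id
/-- An element of `Def(G, H)`, where `H` is the induced subgraph of `G` on `S`: a
multi-homomorphism `η : G → G` with `η w = {w}` for every vertex `w` of `H`. -/
def IsDefMultiHom {V : Type*} (G : SymGraph V) (S : Set V) (η : V → Set V) : Prop :=
  IsMultiHom G G η ∧ ∀ w ∈ S, η w = {w}

/-- One step of a zigzag in `Def(G, H)`. -/
def defMHStep {V : Type*} (G : SymGraph V) (S : Set V) (η η' : V → Set V) : Prop :=
  IsDefMultiHom G S η ∧ IsDefMultiHom G S η' ∧ ((∀ v, η v ⊆ η' v) ∨ (∀ v, η' v ⊆ η v))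

/-- The induced subgraph of `G` on `S` is a ×-homotopy deformation retract of `G`: there is a
graph homomorphism `f` in the identity component of `Def(G, H)` with `f v ∈ S` for every
vertex `v` of `G`. -/
def IsXDefRetract {V : Type*} (G : SymGraph V) (S : Set V) : Prop :=
  ∃ f : V → V, IsDefMultiHom G S (fun v => {f v}) ∧
    Relation.ReflTransGen (defMHStep G S) (fun v => {v}) (fun v => {f v}) ∧
    ∀ v, f v ∈ S

/-- The identifications defining the pushout `Y ∪_H G`, where `H` is the induced subgraph of
`G` on `S` and `f : H → Y`: each `v ∈ S` is identified with `f v`. -/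
def pushRel {VG VY : Type*} (S : Set VG) (f : VG → VY) (x y : VG ⊕ VY) : Prop :=
  ∃ v ∈ S, x = Sum.inl v ∧ y = Sum.inr (f v)

/-- The pushout graph `X = Y ∪_H G`: its vertex set is the quotient of `V(G) ⊔ V(Y)`
identifying each vertex `v` of `H` with `f v`, and its edges are the images of the edges of
`G` and of `Y`. -/
def pushoutGraph {VG VY : Type*} (G : SymGraph VG) (Y : SymGraph VY) (S : Set VG) (f : VG → VY) :
    SymGraph (Quot (pushRel S f)) where
  Adj c d :=
    (∃ v w, G.Adj v w ∧ Quot.mk (pushRel S f) (Sum.inl v) = c ∧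
      Quot.mk (pushRel S f) (Sum.inl w) = d) ∨
    (∃ y z, Y.Adj y z ∧ Quot.mk (pushRel S f) (Sum.inr y) = c ∧
      Quot.mk (pushRel S f) (Sum.inr z) = d)
  symm := by
    rintro c d (⟨v, w, h, hv, hw⟩ | ⟨y, z, h, hy, hz⟩)
    · exact Or.inl ⟨w, v, G.symm _ _ h, hw, hv⟩
    · exact Or.inr ⟨z, y, Y.symm _ _ h, hz, hy⟩

section PushoutAux

variable {VG VY : Type*}

/-- Explicit description of the equivalence closure of `pushRel`. -/
def pushR (S : Set VG) (f : VG → VY) (x y : VG ⊕ VY) : Prop :=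
  match x, y with
  | Sum.inl v, Sum.inl w => v = w ∨ (v ∈ S ∧ w ∈ S ∧ f v = f w)
  | Sum.inl v, Sum.inr y => v ∈ S ∧ f v = y
  | Sum.inr y, Sum.inl v => v ∈ S ∧ f v = y
  | Sum.inr y, Sum.inr z => y = z

lemma pushR_of_eqvGen (S : Set VG) (f : VG → VY) {x y : VG ⊕ VY}
    (h : Relation.EqvGen (pushRel S f) x y) : pushR S f x y := by
  induction h with
  | rel a b hab => obtain ⟨v, hv, rfl, rfl⟩ := hab; exact ⟨hv, rfl⟩
  | refl a => cases a <;> simp [pushR]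
  | symm a b _ ih => cases a <;> cases b <;> simp only [pushR] at * <;> aesop
  | trans a b c _ _ ih1 ih2 => cases a <;> cases b <;> cases c <;> simp only [pushR] at * <;> aesop

lemma quot_inl_inl {S : Set VG} {f : VG → VY} {v w : VG}
    (h : Quot.mk (pushRel S f) (Sum.inl v) = Quot.mk (pushRel S f) (Sum.inl w)) :
    v = w ∨ (v ∈ S ∧ w ∈ S ∧ f v = f w) :=
  pushR_of_eqvGen S f (Quot.eq.mp h)

lemma quot_inl_inr {S : Set VG} {f : VG → VY} {v : VG} {y : VY}
    (h : Quot.mk (pushRel S f) (Sum.inl v) = Quot.mk (pushRel S f) (Sum.inr y)) :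
    v ∈ S ∧ f v = y :=
  pushR_of_eqvGen S f (Quot.eq.mp h)

lemma quot_inr_inl {S : Set VG} {f : VG → VY} {v : VG} {y : VY}
    (h : Quot.mk (pushRel S f) (Sum.inr y) = Quot.mk (pushRel S f) (Sum.inl v)) :
    v ∈ S ∧ f v = y :=
  pushR_of_eqvGen S f (Quot.eq.mp h)

lemma quot_mem_S {S : Set VG} (f : VG → VY) {v : VG} (hv : v ∈ S) :
    Quot.mk (pushRel S f) (Sum.inl v) = Quot.mk (pushRel S f) (Sum.inr (f v)) :=
  Quot.sound ⟨v, hv, rfl, rfl⟩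

/-- Lifting a multi-homomorphism on `G` to the pushout. -/
def hatMH (S : Set VG) (f : VG → VY) (η : VG → Set VG) (c : Quot (pushRel S f)) :
    Set (Quot (pushRel S f)) :=
  {d | (∃ v x, c = Quot.mk (pushRel S f) (Sum.inl v) ∧ x ∈ η v ∧
        d = Quot.mk (pushRel S f) (Sum.inl x)) ∨
       (∃ y, c = Quot.mk (pushRel S f) (Sum.inr y) ∧ d = c)}

lemma hat_inl {S : Set VG} {f : VG → VY} {η : VG → Set VG}
    (hS : ∀ w ∈ S, η w = {w}) (v : VG) :
    hatMH S f η (Quot.mk (pushRel S f) (Sum.inl v)) =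
      (fun x => Quot.mk (pushRel S f) (Sum.inl x)) '' η v := by
  ext d
  simp only [hatMH, Set.mem_setOf_eq, Set.mem_image]
  constructor
  · rintro (⟨v', x, hc, hx, rfl⟩ | ⟨y, hc, rfl⟩)
    · rcases quot_inl_inl hc with rfl | ⟨hv, hv', _⟩
      · exact ⟨x, hx, rfl⟩
      · rw [hS v' hv'] at hx
        rcases hx with rfl
        exact ⟨v, by rw [hS v hv]; rfl, hc⟩
    · obtain ⟨hv, _⟩ := quot_inl_inr hc
      exact ⟨v, by rw [hS v hv]; rfl, rfl⟩
  · rintro ⟨x, hx, rfl⟩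
    exact Or.inl ⟨v, x, rfl, hx, rfl⟩

lemma hat_inr {S : Set VG} {f : VG → VY} {η : VG → Set VG}
    (hS : ∀ w ∈ S, η w = {w}) (y : VY) :
    hatMH S f η (Quot.mk (pushRel S f) (Sum.inr y)) =
      {Quot.mk (pushRel S f) (Sum.inr y)} := by
  ext d
  simp only [hatMH, Set.mem_setOf_eq, Set.mem_singleton_iff]
  constructor
  · rintro (⟨v', x, hc, hx, rfl⟩ | ⟨z, hc, rfl⟩)
    · obtain ⟨hv', hfv'⟩ := quot_inr_inl hc
      rw [hS v' hv'] at hx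
      rcases hx with rfl
      exact hc.symm
    · rfl
  · rintro rfl
    exact Or.inr ⟨y, rfl, rfl⟩

lemma hat_isDef {G : SymGraph VG} (Y : SymGraph VY) {S : Set VG} {f : VG → VY}
    {η : VG → Set VG} (hη : IsDefMultiHom G S η) :
    IsDefMultiHom (pushoutGraph G Y S f)
      {c | ∃ y : VY, Quot.mk (pushRel S f) (Sum.inr y) = c} (hatMH S f η) := by
  obtain ⟨⟨hne, hadj⟩, hS⟩ := hη
  refine ⟨⟨?_, ?_⟩, ?_⟩
  · intro c
    induction c using Quot.ind with
    | _ a =>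
      cases a with
      | inl v =>
        rw [hat_inl hS]
        exact (hne v).image _
      | inr y =>
        rw [hat_inr hS]
        exact ⟨_, rfl⟩
  · rintro c d (⟨v, w, hvw, rfl, rfl⟩ | ⟨y, z, hyz, rfl, rfl⟩) x hx y' hy'
    · rw [hat_inl hS] at hx hy'
      obtain ⟨x₀, hx₀, rfl⟩ := hx
      obtain ⟨y₀, hy₀, rfl⟩ := hy'
      exact Or.inl ⟨x₀, y₀, hadj v w hvw x₀ hx₀ y₀ hy₀, rfl, rfl⟩
    · rw [hat_inr hS] at hx hy'
      rcases hx with rfl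
      rcases hy' with rfl
      exact Or.inr ⟨y, z, hyz, rfl, rfl⟩
  · rintro c ⟨y, rfl⟩
    exact hat_inr hS y

lemma hat_mono {S : Set VG} {f : VG → VY} {η η' : VG → Set VG}
    (h : ∀ v, η v ⊆ η' v) : ∀ c, hatMH S f η c ⊆ hatMH S f η' c := by
  rintro c d (⟨v, x, hc, hx, rfl⟩ | h2)
  · exact Or.inl ⟨v, x, hc, h v hx, rfl⟩
  · exact Or.inr h2

lemma hat_id (S : Set VG) (f : VG → VY) :
    hatMH S f (fun v => {v}) = fun c => {c} := by
  funext c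
  induction c using Quot.ind with
  | _ a =>
    cases a with
    | inl v =>
      rw [hat_inl (fun w _ => rfl)]
      exact Set.image_singleton
    | inr y => exact hat_inr (fun w _ => rfl) y

end PushoutAux

/-- Let H be an induced subgraph of a graph G (on the vertex set S), let
f : H → Y be a graph homomorphism, and let X = Y ∪_H G be the pushout.  If H is a ×-homotopy
deformation retract of G, then Y, viewed as a subgraph of X via the natural map, is a
×-homotopy deformation retract of X. -/
theorem pushout_xDefRetract {VG VY : Type*} (G : SymGraph VG) (Y : SymGraph VY)
    (S : Set VG) (f : VG → VY)
    (hf : ∀ v ∈ S, ∀ w ∈ S, G.Adj v w → Y.Adj (f v) (f w))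
    (h : IsXDefRetract G S) :
    IsXDefRetract (pushoutGraph G Y S f)
      {c | ∃ y : VY, Quot.mk (pushRel S f) (Sum.inr y) = c} := by
  obtain ⟨g, hg, hzig, hgS⟩ := h
  have hgfix : ∀ v ∈ S, g v = v := fun v hv =>
    Set.singleton_eq_singleton_iff.mp (hg.2 v hv)
  have hlift : ∀ a b, pushRel S f a b →
      Sum.elim (fun v => Quot.mk (pushRel S f) (Sum.inl (g v)))
        (fun y => Quot.mk (pushRel S f) (Sum.inr y)) a =
      Sum.elim (fun v => Quot.mk (pushRel S f) (Sum.inl (g v)))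
        (fun y => Quot.mk (pushRel S f) (Sum.inr y)) b := by
    rintro a b ⟨v, hv, rfl, rfl⟩
    simp only [Sum.elim_inl, Sum.elim_inr, hgfix v hv]
    exact quot_mem_S f hv
  set F : Quot (pushRel S f) → Quot (pushRel S f) :=
    Quot.lift (Sum.elim (fun v => Quot.mk (pushRel S f) (Sum.inl (g v)))
      (fun y => Quot.mk (pushRel S f) (Sum.inr y))) hlift with hF
  have hatg : hatMH S f (fun v => {g v}) = fun c => {F c} := by
    funext c
    induction c using Quot.ind with
    | _ a =>
      cases a with
      | inl v => rw [hat_inl hg.2]; exact Set.image_singleton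
      | inr y => exact hat_inr hg.2 y
  refine ⟨F, ?_, ?_, ?_⟩
  · rw [← hatg]
    exact hat_isDef Y hg
  · have := Relation.ReflTransGen.lift (hatMH S f)
      (fun hη hη' (hstep : defMHStep G S hη hη') =>
        show defMHStep (pushoutGraph G Y S f) _ (hatMH S f hη) (hatMH S f hη') from
        ⟨hat_isDef Y hstep.1, hat_isDef Y hstep.2.1,
          hstep.2.2.imp hat_mono hat_mono⟩) _ _ hzig
    rwa [Function.onFun, hat_id, hatg] at this
  · intro c
    induction c using Quot.ind with
    | _ a =>
      cases a with
      | inl v => exact ⟨f (g v), (quot_mem_S f (hgS v)).symm⟩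
      | inr y => exact ⟨y, rfl⟩
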